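/- The function $f(x, y, z_1, \dots, z_n) = \log(xy - \sum_{i=1}^n z_i^2)$ is concave on the open convex set $\{(x,y,z) \in \mathbb{R}^{n+2} : x > 0,\ y > 0,\ xy - \sum_i z_i^2 > 0\}$. -/

import Mathlib

open Finset

private lemma sum_expand {n : ℕ} (z1 z2 : Fin n → ℝ) (a b : ℝ) :
    ∑ i : Fin n, (a * z1 i + b * z2 i) ^ 2 =
      a ^ 2 * ∑ i : Fin n, (z1 i) ^ 2 + 2 * a * b * ∑ i : Fin n, z1 i * z2 i
        + b ^ 2 * ∑ i : Fin n, (z2 i) ^ 2 := by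
  rw [Finset.mul_sum, Finset.mul_sum, Finset.mul_sum, ← Finset.sum_add_distrib,
    ← Finset.sum_add_distrib]
  exact Finset.sum_congr rfl fun i _ => by ring

private lemma combo_pos {a b x y : ℝ} (ha : 0 ≤ a) (hb : 0 ≤ b) (hab : a + b = 1)
    (hx : 0 < x) (hy : 0 < y) : 0 < a * x + b * y := by
  rcases ha.lt_or_eq with h | h
  · nlinarith [mul_pos h hx, mul_nonneg hb hy.le]
  · have hb1 : b = 1 := by linarith
    simp [← h, hb1, hy]

private lemma key_cs {n : ℕ} {x1 y1 x2 y2 : ℝ} {z1 z2 : Fin n → ℝ}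
    (hx1 : 0 < x1) (hx2 : 0 < x2)
    (hA : 0 < x1 * y1 - ∑ i : Fin n, (z1 i) ^ 2)
    (hB : 0 < x2 * y2 - ∑ i : Fin n, (z2 i) ^ 2) :
    Real.sqrt ((x1 * y1 - ∑ i : Fin n, (z1 i) ^ 2) * (x2 * y2 - ∑ i : Fin n, (z2 i) ^ 2))
      ≤ (x1 * y2 + x2 * y1) / 2 - ∑ i : Fin n, z1 i * z2 i := by
  set A := x1 * y1 - ∑ i : Fin n, (z1 i) ^ 2 with hAdef
  set B := x2 * y2 - ∑ i : Fin n, (z2 i) ^ 2 with hBdef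
  set Q := (x1 * y2 + x2 * y1) / 2 - ∑ i : Fin n, z1 i * z2 i with hQdef
  set μ := x1 / x2 with hμdef
  have hμ : 0 < μ := div_pos hx1 hx2
  have hx : x1 - μ * x2 = 0 := by rw [hμdef]; field_simp; ring
  have hq : A - 2 * μ * Q + μ ^ 2 * B ≤ 0 := by
    have hid : A - 2 * μ * Q + μ ^ 2 * B
        = (x1 - μ * x2) * (y1 - μ * y2) - ∑ i : Fin n, (1 * z1 i + (-μ) * z2 i) ^ 2 := by
      rw [sum_expand z1 z2 1 (-μ), hAdef, hBdef, hQdef]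
      ring
    rw [hid, hx, zero_mul, zero_sub, neg_nonpos]
    exact Finset.sum_nonneg fun i _ => sq_nonneg _
  have hamgm : 2 * μ * Real.sqrt (A * B) ≤ A + μ ^ 2 * B := by
    rw [Real.sqrt_mul hA.le]
    nlinarith [Real.sq_sqrt hA.le, Real.sq_sqrt hB.le, Real.sqrt_nonneg A,
      Real.sqrt_nonneg B, sq_nonneg (Real.sqrt A - μ * Real.sqrt B)]
  have h2 : 2 * μ * Real.sqrt (A * B) ≤ 2 * μ * Q := le_trans hamgm (by linarith)
  exact le_of_mul_le_mul_left h2 (by positivity)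

private lemma comb_lower {n : ℕ} {x1 y1 x2 y2 : ℝ} {z1 z2 : Fin n → ℝ} {a b : ℝ}
    (hx1 : 0 < x1) (hx2 : 0 < x2)
    (hA : 0 < x1 * y1 - ∑ i : Fin n, (z1 i) ^ 2)
    (hB : 0 < x2 * y2 - ∑ i : Fin n, (z2 i) ^ 2)
    (ha : 0 ≤ a) (hb : 0 ≤ b) :
    (a * Real.sqrt (x1 * y1 - ∑ i : Fin n, (z1 i) ^ 2)
        + b * Real.sqrt (x2 * y2 - ∑ i : Fin n, (z2 i) ^ 2)) ^ 2
      ≤ (a * x1 + b * x2) * (a * y1 + b * y2) - ∑ i : Fin n, (a * z1 i + b * z2 i) ^ 2 := by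
  set A := x1 * y1 - ∑ i : Fin n, (z1 i) ^ 2 with hAdef
  set B := x2 * y2 - ∑ i : Fin n, (z2 i) ^ 2 with hBdef
  have hQ := key_cs hx1 hx2 hA hB
  have hsAB : Real.sqrt A * Real.sqrt B = Real.sqrt (A * B) := (Real.sqrt_mul hA.le B).symm
  have hrhs : (a * x1 + b * x2) * (a * y1 + b * y2) - ∑ i : Fin n, (a * z1 i + b * z2 i) ^ 2
      = a ^ 2 * A + 2 * a * b * ((x1 * y2 + x2 * y1) / 2 - ∑ i : Fin n, z1 i * z2 i)
        + b ^ 2 * B := by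
    rw [sum_expand]
    simp only [hAdef, hBdef]
    ring
  rw [hrhs]
  have hab : 0 ≤ 2 * a * b := by positivity
  nlinarith [Real.sq_sqrt hA.le, Real.sq_sqrt hB.le, mul_le_mul_of_nonneg_left hQ hab]

theorem log_quadratic_concave (n : ℕ) :
    ConcaveOn ℝ
      {p : ℝ × ℝ × (Fin n → ℝ) |
        0 < p.1 ∧ 0 < p.2.1 ∧ 0 < p.1 * p.2.1 - ∑ i : Fin n, (p.2.2 i) ^ 2}
      (fun p => Real.log (p.1 * p.2.1 - ∑ i : Fin n, (p.2.2 i) ^ 2)) := by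
  have main : ∀ (p q : ℝ × ℝ × (Fin n → ℝ)),
      p ∈ {p : ℝ × ℝ × (Fin n → ℝ) |
        0 < p.1 ∧ 0 < p.2.1 ∧ 0 < p.1 * p.2.1 - ∑ i : Fin n, (p.2.2 i) ^ 2} →
      q ∈ {p : ℝ × ℝ × (Fin n → ℝ) |
        0 < p.1 ∧ 0 < p.2.1 ∧ 0 < p.1 * p.2.1 - ∑ i : Fin n, (p.2.2 i) ^ 2} →
      ∀ a b : ℝ, 0 ≤ a → 0 ≤ b → a + b = 1 →
      0 < (a • p + b • q).1 ∧ 0 < (a • p + b • q).2.1 ∧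
      (a * Real.sqrt (p.1 * p.2.1 - ∑ i : Fin n, (p.2.2 i) ^ 2)
        + b * Real.sqrt (q.1 * q.2.1 - ∑ i : Fin n, (q.2.2 i) ^ 2)) ^ 2
        ≤ (a • p + b • q).1 * (a • p + b • q).2.1
          - ∑ i : Fin n, ((a • p + b • q).2.2 i) ^ 2 := by
    rintro ⟨x1, y1, z1⟩ ⟨x2, y2, z2⟩ ⟨hx1, hy1, hA⟩ ⟨hx2, hy2, hB⟩ a b ha hb hab
    simp only [Prod.smul_mk, Prod.mk_add_mk, smul_eq_mul, Pi.add_apply, Pi.smul_apply] at *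
    refine ⟨combo_pos ha hb hab hx1 hx2, combo_pos ha hb hab hy1 hy2, ?_⟩
    exact comb_lower hx1 hx2 hA hB ha hb
  have hsqrtpos : ∀ (p q : ℝ × ℝ × (Fin n → ℝ)) (a b : ℝ),
      0 < p.1 * p.2.1 - ∑ i : Fin n, (p.2.2 i) ^ 2 →
      0 < q.1 * q.2.1 - ∑ i : Fin n, (q.2.2 i) ^ 2 →
      0 ≤ a → 0 ≤ b → a + b = 1 →
      0 < a * Real.sqrt (p.1 * p.2.1 - ∑ i : Fin n, (p.2.2 i) ^ 2)
        + b * Real.sqrt (q.1 * q.2.1 - ∑ i : Fin n, (q.2.2 i) ^ 2) := by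
    intro p q a b hA hB ha hb hab
    have h1 : 0 < Real.sqrt (p.1 * p.2.1 - ∑ i : Fin n, (p.2.2 i) ^ 2) := Real.sqrt_pos.2 hA
    have h2 : 0 < Real.sqrt (q.1 * q.2.1 - ∑ i : Fin n, (q.2.2 i) ^ 2) := Real.sqrt_pos.2 hB
    exact combo_pos ha hb hab h1 h2
  constructor
  · intro p hp q hq a b ha hb hab
    obtain ⟨h1, h2, h3⟩ := main p q hp hq a b ha hb hab
    refine ⟨h1, h2, lt_of_lt_of_le ?_ h3⟩
    have := hsqrtpos p q a b hp.2.2 hq.2.2 ha hb hab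
    positivity
  · intro p hp q hq a b ha hb hab
    obtain ⟨h1, h2, h3⟩ := main p q hp hq a b ha hb hab
    set A := p.1 * p.2.1 - ∑ i : Fin n, (p.2.2 i) ^ 2 with hAdef
    set B := q.1 * q.2.1 - ∑ i : Fin n, (q.2.2 i) ^ 2 with hBdef
    have hA : 0 < A := hp.2.2
    have hB : 0 < B := hq.2.2
    have hsA : 0 < Real.sqrt A := Real.sqrt_pos.2 hA
    have hsB : 0 < Real.sqrt B := Real.sqrt_pos.2 hB
    have hcomb : 0 < a * Real.sqrt A + b * Real.sqrt B := hsqrtpos p q a b hA hB ha hb hab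
    -- concavity of log applied to sqrt A, sqrt B
    have hlog : a * Real.log (Real.sqrt A) + b * Real.log (Real.sqrt B)
        ≤ Real.log (a * Real.sqrt A + b * Real.sqrt B) := by
      have := strictConcaveOn_log_Ioi.concaveOn.2 (Set.mem_Ioi.2 hsA) (Set.mem_Ioi.2 hsB)
        ha hb hab
      simpa using this
    have hlogA : Real.log (Real.sqrt A) = Real.log A / 2 := Real.log_sqrt hA.le
    have hlogB : Real.log (Real.sqrt B) = Real.log B / 2 := Real.log_sqrt hB.le
    have hsq : Real.log ((a * Real.sqrt A + b * Real.sqrt B) ^ 2)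
        = 2 * Real.log (a * Real.sqrt A + b * Real.sqrt B) := by
      rw [Real.log_pow]; push_cast; ring
    have hmono : Real.log ((a * Real.sqrt A + b * Real.sqrt B) ^ 2)
        ≤ Real.log ((a • p + b • q).1 * (a • p + b • q).2.1
          - ∑ i : Fin n, ((a • p + b • q).2.2 i) ^ 2) :=
      Real.log_le_log (by positivity) h3
    simp only [smul_eq_mul]
    calc a • Real.log A + b • Real.log B
        = 2 * (a * Real.log (Real.sqrt A) + b * Real.log (Real.sqrt B)) := by
          simp only [smul_eq_mul, hlogA, hlogB]; ring
      _ ≤ 2 * Real.log (a * Real.sqrt A + b * Real.sqrt B) := by linarith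
      _ = Real.log ((a * Real.sqrt A + b * Real.sqrt B) ^ 2) := hsq.symm
      _ ≤ _ := hmono
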